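/- For every prime p and positive integer n, the order of the symplectic group Sp(2n, 𝔽_p) equals the product over m = 1,…,n of (p^{2m} - 1)·p^{2m-1}. -/

import Mathlib

open Matrix LinearMap Module Finset

variable {F V : Type} [Field F] [Fintype F] [AddCommGroup V] [Module F V] [Finite V]

lemma card_fiber_one (φ : V →ₗ[F] F) (hφ : φ ≠ 0) :
    Nat.card {f : V // φ f = 1} = Fintype.card F ^ (Module.finrank F V - 1) := by
  have : Module.Finite F V := Module.Finite.of_finite
  obtain ⟨y, hy⟩ : ∃ y, φ y ≠ 0 := by
    by_contra h; push_neg at h; exact hφ (LinearMap.ext fun v => by simp [h v])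
  have hsurj : Function.Surjective φ := by
    intro a; exact ⟨(a * (φ y)⁻¹) • y, by rw [LinearMap.map_smul, smul_eq_mul, mul_assoc, inv_mul_cancel₀ hy, mul_one]⟩
  set f₁ : V := (φ y)⁻¹ • y with hf₁
  have hφf₁ : φ f₁ = 1 := by rw [hf₁, LinearMap.map_smul, smul_eq_mul, inv_mul_cancel₀ hy]
  have e : {f : V // φ f = 1} ≃ LinearMap.ker φ :=
    { toFun := fun f => ⟨f.1 - f₁, by simp [LinearMap.mem_ker, f.2, hφf₁]⟩
      invFun := fun g => ⟨g.1 + f₁, by have := g.2; simp [LinearMap.mem_ker] at this; simp [this, hφf₁]⟩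
      left_inv := fun f => by ext; simp
      right_inv := fun g => by ext; simp }
  have hker : Module.finrank F (LinearMap.ker φ) = Module.finrank F V - 1 := by
    have h1 := LinearMap.finrank_range_add_finrank_ker φ
    rw [LinearMap.range_eq_top.mpr hsurj, finrank_top, Module.finrank_self] at h1
    omega
  rw [Nat.card_congr e]
  have : Fintype (LinearMap.ker φ) := Fintype.ofFinite _
  rw [Nat.card_eq_fintype_card, card_eq_pow_finrank (K := F), hker]

lemma card_hyperbolic_pairs (B : V →ₗ[F] V →ₗ[F] F)
    (hnd : ∀ x : V, x ≠ 0 → ∃ y, B x y ≠ 0) :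
    Nat.card {p : V × V // B p.1 p.2 = 1} =
      (Fintype.card F ^ Module.finrank F V - 1) *
        Fintype.card F ^ (Module.finrank F V - 1) := by
  classical
  have : Module.Finite F V := Module.Finite.of_finite
  have : Fintype V := Fintype.ofFinite _
  have e := Equiv.subtypeProdEquivSigmaSubtype (fun (x y : V) => B x y = 1)
  rw [Nat.card_congr e, Nat.card_eq_fintype_card, Fintype.card_sigma]
  have hterm : ∀ x : V, Fintype.card {y // B x y = 1} =
      if x = 0 then 0 else Fintype.card F ^ (Module.finrank F V - 1) := by
    intro x
    by_cases hx : x = 0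
    · subst hx
      rw [if_pos rfl, Fintype.card_eq_zero_iff]
      exact ⟨fun y => by simpa using y.2⟩
    · rw [if_neg hx, ← Nat.card_eq_fintype_card]
      apply card_fiber_one
      obtain ⟨y, hy⟩ := hnd x hx
      intro h; exact hy (by rw [h]; simp)
  rw [Finset.sum_congr rfl (fun x _ => hterm x),
    ← Finset.sum_erase_add _ _ (Finset.mem_univ (0 : V)), if_pos rfl, add_zero,
    Finset.sum_congr rfl (fun x hx => if_neg (Finset.mem_erase.mp hx).1),
    Finset.sum_const, Finset.card_erase_of_mem (Finset.mem_univ _), Finset.card_univ,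
    card_eq_pow_finrank (K := F), smul_eq_mul]

lemma W_finrank (B : V →ₗ[F] V →ₗ[F] F) (hB : B.IsAlt) {e0 f0 : V} (h01 : B e0 f0 = 1) :
    Module.finrank F (LinearMap.ker (B e0) ⊓ LinearMap.ker (B f0) : Submodule F V) =
      Module.finrank F V - 2 ∧ 2 ≤ Module.finrank F V := by
  have : Module.Finite F V := Module.Finite.of_finite
  set Φ : V →ₗ[F] F × F := (B e0).prod (B f0) with hΦ
  have hker : LinearMap.ker Φ = LinearMap.ker (B e0) ⊓ LinearMap.ker (B f0) :=
    LinearMap.ker_prod _ _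
  have hne0 : B f0 e0 = -1 := by rw [← hB.neg e0 f0, h01]
  have hsurj : Function.Surjective Φ := by
    rintro ⟨a, b⟩
    refine ⟨a • f0 - b • e0, ?_⟩
    simp [hΦ, LinearMap.prod_apply, map_sub, hB.self_eq_zero, h01, hne0]
  have h1 := LinearMap.finrank_range_add_finrank_ker Φ
  rw [LinearMap.range_eq_top.mpr hsurj, finrank_top, Module.finrank_prod,
    Module.finrank_self, hker] at h1
  omega

lemma W_nondeg (B : V →ₗ[F] V →ₗ[F] F) (hB : B.IsAlt) {e0 f0 : V} (h01 : B e0 f0 = 1)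
    (hnd : ∀ x : V, x ≠ 0 → ∃ y, B x y ≠ 0)
    (x : (LinearMap.ker (B e0) ⊓ LinearMap.ker (B f0) : Submodule F V)) (hx : x ≠ 0) :
    ∃ y, (B.domRestrict₁₂ (LinearMap.ker (B e0) ⊓ LinearMap.ker (B f0))
      (LinearMap.ker (B e0) ⊓ LinearMap.ker (B f0))) x y ≠ 0 := by
  have hxV : (x : V) ≠ 0 := fun h => hx (Subtype.ext h)
  obtain ⟨v, hv⟩ := hnd x hxV
  have hne0 : B f0 e0 = -1 := by rw [← hB.neg e0 f0, h01]
  have hx1 : B e0 (x : V) = 0 := x.2.1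
  have hx2 : B f0 (x : V) = 0 := x.2.2
  have hxe0 : B (x : V) e0 = 0 := by rw [← hB.neg e0 (x : V), hx1, neg_zero]
  have hxf0 : B (x : V) f0 = 0 := by rw [← hB.neg f0 (x : V), hx2, neg_zero]
  refine ⟨⟨v - (B e0 v) • f0 + (B f0 v) • e0, ?_, ?_⟩, ?_⟩
  · show B e0 _ = 0
    simp [map_add, map_sub, hB.self_eq_zero, h01]
  · show B f0 _ = 0
    simp [map_add, map_sub, hB.self_eq_zero, hne0]
  · rw [LinearMap.domRestrict₁₂_apply]
    simpa [map_add, map_sub, hxe0, hxf0] using hv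

def SymplSys {M : Type} [AddCommGroup M] [Module F M] {k : ℕ}
    (B : M →ₗ[F] M →ₗ[F] F) (e f : Fin k → M) : Prop :=
  (∀ i j, B (e i) (e j) = 0) ∧ (∀ i j, B (f i) (f j) = 0) ∧
    (∀ i j, B (e i) (f j) = if i = j then 1 else 0)

theorem count_symplSys : ∀ (k : ℕ) (M : Type) [AddCommGroup M] [Module F M] [Finite M]
    (B : M →ₗ[F] M →ₗ[F] F), B.IsAlt → (∀ x : M, x ≠ 0 → ∃ y, B x y ≠ 0) →
    2 * k ≤ Module.finrank F M →
    Nat.card {ef : (Fin k → M) × (Fin k → M) // SymplSys B ef.1 ef.2} =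
      ∏ i ∈ Finset.range k,
        ((Fintype.card F ^ (Module.finrank F M - 2*i) - 1) *
          Fintype.card F ^ (Module.finrank F M - 2*i - 1)) := by
  intro k
  induction k with
  | zero =>
    intro M _ _ _ B hB hnd hk
    simp only [Finset.range_zero, Finset.prod_empty]
    have : Unique {ef : (Fin 0 → M) × (Fin 0 → M) // SymplSys B ef.1 ef.2} :=
      { default := ⟨(Fin.elim0, Fin.elim0),
          ⟨fun i => i.elim0, fun i => i.elim0, fun i => i.elim0⟩⟩
        uniq := fun x => Subtype.ext
          (Prod.ext_iff.mpr ⟨Subsingleton.elim _ _, Subsingleton.elim _ _⟩) }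
    exact Nat.card_unique
  | succ k ih =>
    intro M _ _ _ B hB hnd hk
    classical
    set d := Module.finrank F M with hd
    set q := Fintype.card F with hq
    set C := ∏ i ∈ Finset.range k, ((q ^ (d - 2 - 2*i) - 1) * q ^ (d - 2 - 2*i - 1)) with hC
    set Sys := {ef : (Fin (k+1) → M) × (Fin (k+1) → M) // SymplSys B ef.1 ef.2} with hSys
    set Pairs := {p : M × M // B p.1 p.2 = 1} with hPairs
    let π : Sys → Pairs := fun s =>
      ⟨(s.1.1 0, s.1.2 0), by simpa using s.2.2.2 0 0⟩
    have hπval : ∀ s : Sys, π s = ⟨(s.1.1 0, s.1.2 0), by simpa using s.2.2.2 0 0⟩ :=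
      fun s => rfl
    have hπeq : ∀ (s : Sys) (a : Pairs), π s = a ↔ s.1.1 0 = a.1.1 ∧ s.1.2 0 = a.1.2 := by
      intro s a; rw [Subtype.ext_iff, Prod.ext_iff]
    have hfiber : ∀ a : Pairs, Nat.card {s : Sys // π s = a} = C := by
      rintro ⟨⟨e0, f0⟩, h01⟩
      have h01' : B e0 f0 = 1 := h01
      set W : Submodule F M := LinearMap.ker (B e0) ⊓ LinearMap.ker (B f0) with hWdef
      set B' := B.domRestrict₁₂ W W with hB'def
      have hB'apply : ∀ x y : W, B' x y = B (x : M) (y : M) := fun _ _ => rfl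
      have hWfr := W_finrank B hB h01'
      rw [← hWdef] at hWfr
      have hB'alt : B'.IsAlt := fun x => by rw [hB'apply]; exact hB.self_eq_zero _
      have hB'nd : ∀ x : W, x ≠ 0 → ∃ y, B' x y ≠ 0 := W_nondeg B hB h01' hnd
      have neg0 : ∀ (x y : M), B x y = 0 → B y x = 0 := fun x y h => by
        rw [← hB.neg, h, neg_zero]
      have hcomp : ∀ s : {s : Sys // π s = ⟨(e0, f0), h01⟩},
          s.1.1.1 0 = e0 ∧ s.1.1.2 0 = f0 := fun s => (hπeq s.1 _).mp s.2
      have mem_e : ∀ (s : {s : Sys // π s = ⟨(e0, f0), h01⟩}) (i : Fin k),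
          s.1.1.1 i.succ ∈ W := by
        intro s i
        obtain ⟨h1, h2⟩ := hcomp s
        refine ⟨?_, ?_⟩
        · show B e0 _ = 0
          have t := s.1.2.1 0 i.succ; rw [h1] at t; exact t
        · show B f0 _ = 0
          have t := s.1.2.2.2 i.succ 0
          rw [if_neg (Fin.succ_ne_zero i), h2] at t
          exact neg0 _ _ t
      have mem_f : ∀ (s : {s : Sys // π s = ⟨(e0, f0), h01⟩}) (i : Fin k),
          s.1.1.2 i.succ ∈ W := by
        intro s i
        obtain ⟨h1, h2⟩ := hcomp s
        refine ⟨?_, ?_⟩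
        · show B e0 _ = 0
          have t := s.1.2.2.2 0 i.succ
          rw [if_neg (Ne.symm (Fin.succ_ne_zero i)), h1] at t
          exact t
        · show B f0 _ = 0
          have t := s.1.2.2.1 0 i.succ; rw [h2] at t; exact t
      have cons_sys : ∀ (E Fv : Fin k → W), SymplSys B' E Fv →
          SymplSys B (Fin.cons e0 fun i => (E i : M)) (Fin.cons f0 fun i => (Fv i : M)) := by
        intro E Fv hx
        refine ⟨?_, ?_, ?_⟩ <;> intro i j
        · induction i using Fin.cases with
          | zero => induction j using Fin.cases with
            | zero => simpa using hB.self_eq_zero e0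
            | succ j => simpa using (E j).2.1
          | succ i => induction j using Fin.cases with
            | zero => simpa using neg0 _ _ (E i).2.1
            | succ j => simpa using (hB'apply _ _) ▸ hx.1 i j
        · induction i using Fin.cases with
          | zero => induction j using Fin.cases with
            | zero => simpa using hB.self_eq_zero f0
            | succ j => simpa using (Fv j).2.2
          | succ i => induction j using Fin.cases with
            | zero => simpa using neg0 _ _ (Fv i).2.2
            | succ j => simpa using (hB'apply _ _) ▸ hx.2.1 i j
        · induction i using Fin.cases with
          | zero => induction j using Fin.cases with
            | zero => simpa using h01'
            | succ j =>
              rw [Fin.cons_zero, Fin.cons_succ, if_neg (Ne.symm (Fin.succ_ne_zero j))]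
              exact (Fv j).2.1
          | succ i => induction j using Fin.cases with
            | zero =>
              rw [Fin.cons_succ, Fin.cons_zero, if_neg (Fin.succ_ne_zero i)]
              exact neg0 _ _ (E i).2.2
            | succ j =>
              rw [Fin.cons_succ, Fin.cons_succ, ← hB'apply, hx.2.2 i j]
              simp [Fin.succ_inj]
      have E : {s : Sys // π s = ⟨(e0, f0), h01⟩} ≃
          {ef : (Fin k → W) × (Fin k → W) // SymplSys B' ef.1 ef.2} :=
        { toFun := fun s =>
            ⟨(fun i => ⟨s.1.1.1 i.succ, mem_e s i⟩, fun i => ⟨s.1.1.2 i.succ, mem_f s i⟩), by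
              refine ⟨?_, ?_, ?_⟩ <;> intro i j <;> rw [hB'apply]
              · exact s.1.2.1 i.succ j.succ
              · exact s.1.2.2.1 i.succ j.succ
              · rw [s.1.2.2.2 i.succ j.succ]; simp [Fin.succ_inj]⟩
          invFun := fun x =>
            ⟨⟨(Fin.cons e0 fun i => (x.1.1 i : M), Fin.cons f0 fun i => (x.1.2 i : M)),
              cons_sys _ _ x.2⟩, by
              rw [hπval]
              apply Subtype.ext
              dsimp only
              rw [Fin.cons_zero, Fin.cons_zero]⟩
          left_inv := fun s => by
            obtain ⟨h1, h2⟩ := hcomp s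
            apply Subtype.ext; apply Subtype.ext
            refine Prod.ext_iff.mpr ⟨?_, ?_⟩
            · funext i
              induction i using Fin.cases with
              | zero => simpa [Fin.cons_zero] using h1.symm
              | succ i => simp [Fin.cons_succ]
            · funext i
              induction i using Fin.cases with
              | zero => simpa [Fin.cons_zero] using h2.symm
              | succ i => simp [Fin.cons_succ]
          right_inv := fun x => by
            apply Subtype.ext
            refine Prod.ext_iff.mpr ⟨?_, ?_⟩
            · funext i; apply Subtype.ext; simp [Fin.cons_succ]
            · funext i; apply Subtype.ext; simp [Fin.cons_succ] }
      rw [Nat.card_congr E, ih W B' hB'alt hB'nd (by omega), hWfr.1]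
    have : Fintype Pairs := Fintype.ofFinite _
    calc Nat.card Sys = Nat.card (Σ a : Pairs, {s : Sys // π s = a}) :=
          (Nat.card_congr (Equiv.sigmaFiberEquiv π)).symm
      _ = ∑ a : Pairs, Nat.card {s : Sys // π s = a} := by
          have : ∀ a : Pairs, Fintype {s : Sys // π s = a} := fun a => Fintype.ofFinite _
          rw [Nat.card_eq_fintype_card, Fintype.card_sigma]
          exact Finset.sum_congr rfl fun a _ => Nat.card_eq_fintype_card.symm
      _ = ∑ _a : Pairs, C := Finset.sum_congr rfl fun a _ => hfiber a
      _ = Nat.card Pairs * C := by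
          rw [Finset.sum_const, Finset.card_univ, smul_eq_mul, Nat.card_eq_fintype_card]
      _ = ((q ^ d - 1) * q ^ (d - 1)) * C := by
          rw [card_hyperbolic_pairs B hnd]
      _ = ∏ i ∈ Finset.range (k+1), ((q ^ (d - 2*i) - 1) * q ^ (d - 2*i - 1)) := by
          rw [Finset.prod_range_succ']
          have hexp : ∀ i : ℕ, (q ^ (d - 2*(i+1)) - 1) * q ^ (d - 2*(i+1) - 1)
              = (q ^ (d - 2 - 2*i) - 1) * q ^ (d - 2 - 2*i - 1) := by
            intro i
            rw [show d - 2*(i+1) = d - 2 - 2*i from by omega]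
          rw [Finset.prod_congr rfl fun i _ => hexp i, hC,
            mul_comm ((q ^ d - 1) * q ^ (d - 1)) _]
          congr 2 <;> simp

/-- `|Sp(2n, 𝔽_p)| = ∏_{m=1}^{n} (p^{2m} - 1)·p^{2m-1}`. -/
theorem card_symplecticGroup (p : ℕ) (hp : p.Prime) (n : ℕ) (hn : 0 < n) :
    Nat.card (Matrix.symplecticGroup (Fin n) (ZMod p)) =
      ∏ m ∈ Finset.Icc 1 n, (p ^ (2 * m) - 1) * p ^ (2 * m - 1) := by
  have : Fact p.Prime := ⟨hp⟩
  set F := ZMod p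
  set V := (Fin n ⊕ Fin n) → F with hV
  set B : V →ₗ[F] V →ₗ[F] F := Matrix.toLinearMap₂' F (Matrix.J (Fin n) F) with hBdef
  have hJ : ∀ x y : V, B x y =
      (∑ i, x (Sum.inr i) * y (Sum.inl i)) - ∑ i, x (Sum.inl i) * y (Sum.inr i) := by
    intro x y
    rw [hBdef, Matrix.toLinearMap₂'_apply]
    rw [Fintype.sum_sum_type]
    simp [Matrix.J, Matrix.one_apply, mul_ite, Finset.mul_sum,
      Finset.sum_ite_eq, Finset.sum_ite_eq', Finset.sum_sub_distrib, mul_comm]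
    rw [sub_eq_neg_add]
    simp only [add_left_inj]
    rw [← Finset.sum_neg_distrib]
    refine Finset.sum_congr rfl fun a _ => ?_
    rw [Finset.sum_eq_single a (fun b _ hb => by rw [if_neg (Ne.symm hb), neg_zero, zero_mul, mul_zero])
      (fun h => absurd (Finset.mem_univ a) h), if_pos rfl, neg_mul, one_mul, mul_neg]
  have hBalt : B.IsAlt := by
    intro x
    rw [hJ x x, sub_eq_zero]
    exact Finset.sum_congr rfl fun i _ => mul_comm _ _
  have hBnd : ∀ x : V, x ≠ 0 → ∃ y, B x y ≠ 0 := by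
    intro x hx
    obtain ⟨a, ha⟩ := Function.ne_iff.mp hx
    cases a with
    | inl i =>
      refine ⟨Pi.single (Sum.inr i) 1, ?_⟩
      rw [hJ]
      simpa [Pi.single_apply, mul_ite, Finset.sum_ite_eq'] using show x (Sum.inl i) ≠ 0 from ha
    | inr i =>
      refine ⟨Pi.single (Sum.inl i) 1, ?_⟩
      rw [hJ]
      simpa [Pi.single_apply, mul_ite, Finset.sum_ite_eq'] using show x (Sum.inr i) ≠ 0 from ha
  have key : ∀ (A : Matrix (Fin n ⊕ Fin n) (Fin n ⊕ Fin n) F) i j,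
      (A * Matrix.J (Fin n) F * Aᵀ) i j = B (A i) (A j) := by
    intro A i j
    rw [hBdef, Matrix.toLinearMap₂'_apply]
    simp only [Matrix.mul_apply, Matrix.transpose_apply, smul_eq_mul, Finset.sum_mul]
    rw [Finset.sum_comm]
    exact Finset.sum_congr rfl fun k _ => by
      rw [Finset.sum_mul]; exact Finset.sum_congr rfl fun l _ => by ring
  have hcond : ∀ A : Matrix (Fin n ⊕ Fin n) (Fin n ⊕ Fin n) F,
      A * Matrix.J (Fin n) F * Aᵀ = Matrix.J (Fin n) F ↔
        SymplSys B (fun i => A (Sum.inr i)) (fun i => A (Sum.inl i)) := by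
    intro A
    constructor
    · intro h
      refine ⟨fun i j => ?_, fun i j => ?_, fun i j => ?_⟩
      · rw [← key, h]; simp [Matrix.J]
      · rw [← key, h]; simp [Matrix.J]
      · rw [← key, h]; simp [Matrix.J, Matrix.one_apply]
    · intro hsys
      ext i j
      rw [key]
      cases i with
      | inl i => cases j with
        | inl j => rw [hsys.2.1 i j]; simp [Matrix.J]
        | inr j =>
          rw [← hBalt.neg, hsys.2.2 j i]
          simp [Matrix.J, Matrix.one_apply, eq_comm]
      | inr i => cases j with
        | inl j => rw [hsys.2.2 i j]; simp [Matrix.J, Matrix.one_apply]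
        | inr j => rw [hsys.1 i j]; simp [Matrix.J]
  have E : Matrix.symplecticGroup (Fin n) F ≃
      {ef : (Fin n → V) × (Fin n → V) // SymplSys B ef.1 ef.2} :=
    { toFun := fun A => ⟨(fun i => A.1 (Sum.inr i), fun i => A.1 (Sum.inl i)),
        (hcond A.1).mp (SymplecticGroup.mem_iff.mp A.2)⟩
      invFun := fun x => ⟨Matrix.of (Sum.elim x.1.2 x.1.1),
        SymplecticGroup.mem_iff.mpr ((hcond _).mpr x.2)⟩
      left_inv := fun A => by
        apply Subtype.ext
        funext a b
        cases a <;> rfl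
      right_inv := fun x => by
        apply Subtype.ext
        exact Prod.ext_iff.mpr ⟨rfl, rfl⟩ }
  have hfr : Module.finrank F V = 2 * n := by
    show Module.finrank F (Fin n ⊕ Fin n → F) = 2 * n
    rw [Module.finrank_fintype_fun_eq_card, Fintype.card_sum, Fintype.card_fin]
    omega
  have hq : Fintype.card F = p := ZMod.card p
  rw [Nat.card_congr E, count_symplSys n V B hBalt hBnd (by omega), hfr, hq]
  refine Finset.prod_nbij' (fun i => n - i) (fun m => n - m) ?_ ?_ ?_ ?_ ?_
  all_goals intro a ha
  all_goals simp only [Finset.mem_range, Finset.mem_Icc] at ha ⊢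
  all_goals try omega
  rw [show 2 * n - 2 * a = 2 * (n - a) from by omega]
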